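/- Let {X_t} be a discrete-time Markov chain on a finite state space Ω, reversible with respect to π and with positive semidefinite transition matrix. Let B ⊆ Ω be an event and suppose X₀ is sampled from π conditioned on B. Then Pr(X_t ∈ B) ≥ π(B) for all t ≥ 0, and for all t ≥ 1, Pr(X_t ∈ B) ≥ π(B) + (1−π(B))^{−t+1}·(Pr(X₁ ∈ B) − π(B))^t. -/

import Mathlib

open scoped Classical BigOperators

noncomputable def ent {Ω : Type*} [Fintype Ω] (π f : Ω → ℝ) : ℝ :=
  (∑ x, π x * f x * Real.log (f x)) - (∑ x, π x * f x) * Real.log (∑ x, π x * f x)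

noncomputable def condMean {Ω α : Type*} [Fintype Ω] (ν : Ω → ℝ) (g : Ω → α)
    (f : Ω → ℝ) (x : Ω) : ℝ :=
  (∑ y, if g y = g x then ν y * f y else 0) / (∑ y, if g y = g x then ν y else 0)

noncomputable def avgCondEnt {Ω α : Type*} [Fintype Ω] (ν : Ω → ℝ) (g : Ω → α)
    (f : Ω → ℝ) : ℝ :=
  ∑ x, ν x * f x * (Real.log (f x) - Real.log (condMean ν g f x))

noncomputable def matMulVec {Ω : Type*} [Fintype Ω] (P : Ω → Ω → ℝ) (f : Ω → ℝ) (x : Ω) : ℝ :=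
  ∑ y, P x y * f y

noncomputable def dirForm {Ω : Type*} [Fintype Ω] (π : Ω → ℝ) (P : Ω → Ω → ℝ)
    (f g : Ω → ℝ) : ℝ :=
  ∑ x, π x * f x * (g x - matMulVec P g x)

noncomputable def stepDist {Ω : Type*} [Fintype Ω] (P : Ω → Ω → ℝ) (ζ : Ω → ℝ) (y : Ω) : ℝ :=
  ∑ x, ζ x * P x y

noncomputable def adjointMat {Ω : Type*} [Fintype Ω] (π : Ω → ℝ) (P : Ω → Ω → ℝ)
    (x y : Ω) : ℝ :=
  π y * P y x / π x

noncomputable def matComp {Ω : Type*} [Fintype Ω] (P Q : Ω → Ω → ℝ) (x y : Ω) : ℝ :=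
  ∑ z, P x z * Q z y

/-- Cauchy–Schwarz for a symmetric positive semidefinite bilinear form. -/
lemma cs_aux {Ω : Type*} [Fintype Ω] (T : (Ω → ℝ) → (Ω → ℝ) → ℝ)
    (hlin : ∀ (c : ℝ) (h k l : Ω → ℝ), T (fun x => c * h x + k x) l = c * T h l + T k l)
    (hsymm : ∀ h k, T h k = T k h)
    (hpos : ∀ h, 0 ≤ T h h) (u v : Ω → ℝ) :
    T u v ^ 2 ≤ T u u * T v v := by
  have key : ∀ x : ℝ, 0 ≤ T u u * (x * x) + 2 * T u v * x + T v v := by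
    intro x
    have a1 : T (fun y => x * u y + v y) (fun y => x * u y + v y)
        = x * T u (fun y => x * u y + v y) + T v (fun y => x * u y + v y) := hlin x u v _
    have a2 : T u (fun y => x * u y + v y) = x * T u u + T v u := by
      rw [hsymm, hlin]
    have a3 : T v (fun y => x * u y + v y) = x * T u v + T v v := by
      rw [hsymm, hlin]
    have := hpos (fun y => x * u y + v y)
    rw [a1, a2, a3, hsymm v u] at this
    nlinarith [this]
  have hd := discrim_le_zero key
  simp only [discrim] at hd
  nlinarith [hd]

theorem stmt6 {Ω : Type*} [Fintype Ω]
    (P : Ω → Ω → ℝ) (π : Ω → ℝ) (B : Finset Ω)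
    (hP0 : ∀ x y, 0 ≤ P x y) (hP1 : ∀ x, ∑ y, P x y = 1)
    (hπ0 : ∀ x, 0 < π x) (hπ1 : ∑ x, π x = 1)
    (hrev : ∀ x y, π x * P x y = π y * P y x)
    (hpsd : ∀ f : Ω → ℝ, 0 ≤ ∑ x, π x * f x * matMulVec P f x)
    (hB0 : 0 < ∑ x ∈ B, π x) (hB1 : ∑ x ∈ B, π x < 1) :
    (∀ t : ℕ,
      ∑ x ∈ B, π x ≤
        ∑ x ∈ B, (stepDist P)^[t] (fun y => if y ∈ B then π y / ∑ z ∈ B, π z else 0) x) ∧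
    (∀ t : ℕ, 1 ≤ t →
      (∑ x ∈ B, π x) +
        (1 - ∑ x ∈ B, π x) ^ ((1 : ℤ) - (t : ℤ)) *
          ((∑ x ∈ B, (stepDist P)^[1] (fun y => if y ∈ B then π y / ∑ z ∈ B, π z else 0) x) -
            ∑ x ∈ B, π x) ^ t ≤
        ∑ x ∈ B, (stepDist P)^[t] (fun y => if y ∈ B then π y / ∑ z ∈ B, π z else 0) x) := by
  set πB := ∑ x ∈ B, π x with hπBdef
  set μ : Ω → ℝ := fun y => if y ∈ B then π y / πB else 0 with hμdef
  have hπne : ∀ x : Ω, π x ≠ 0 := fun x => (hπ0 x).ne'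
  have hπB0 : (0:ℝ) < πB := hB0
  have hπBne : πB ≠ 0 := hπB0.ne'
  have hq0 : (0:ℝ) < 1 - πB := by linarith [hB1]
  set f : Ω → ℝ := fun y => μ y / π y with hfdef
  have hπf : ∀ x, π x * f x = μ x := by
    intro x
    simp only [hfdef]
    rw [mul_comm, div_mul_cancel₀ _ (hπne x)]
  set M : (Ω → ℝ) → Ω → ℝ := matMulVec P with hMdef
  -- column sums
  have hcol : ∀ y, ∑ x, π x * P x y = π y := by
    intro y
    have h : ∀ x, π x * P x y = π y * P y x := fun x => hrev x y
    simp_rw [h, ← Finset.mul_sum, hP1 y, mul_one]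
  -- stationarity
  have stat : ∀ h : Ω → ℝ, ∑ x, π x * M h x = ∑ x, π x * h x := by
    intro h
    simp only [hMdef, matMulVec, Finset.mul_sum]
    rw [Finset.sum_comm]
    refine Finset.sum_congr rfl fun y _ => ?_
    have e : ∀ x, π x * (P x y * h y) = (π x * P x y) * h y := fun x => by ring
    simp_rw [e]
    rw [← Finset.sum_mul, hcol, mul_comm]
  -- self-adjointness
  have adj : ∀ h k : Ω → ℝ, ∑ x, π x * h x * M k x = ∑ x, π x * M h x * k x := by
    intro h k
    have L : ∑ x, π x * h x * M k x = ∑ x, ∑ y, π x * P x y * (h x * k y) := by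
      refine Finset.sum_congr rfl fun x _ => ?_
      simp only [hMdef, matMulVec, Finset.mul_sum]
      exact Finset.sum_congr rfl fun y _ => by ring
    have R : ∑ x, π x * M h x * k x = ∑ x, ∑ y, π x * P x y * (h y * k x) := by
      refine Finset.sum_congr rfl fun x _ => ?_
      simp only [hMdef, matMulVec, Finset.mul_sum, Finset.sum_mul]
      exact Finset.sum_congr rfl fun y _ => by ring
    rw [L, R, Finset.sum_comm]
    refine Finset.sum_congr rfl fun y _ => Finset.sum_congr rfl fun x _ => ?_
    rw [hrev x y]
  have adjIter : ∀ (s : ℕ) (h k : Ω → ℝ),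
      ∑ x, π x * h x * M^[s] k x = ∑ x, π x * M^[s] h x * k x := by
    intro s
    induction s with
    | zero => intro h k; simp
    | succ n ih =>
      intro h k
      calc ∑ x, π x * h x * M^[n+1] k x
          = ∑ x, π x * h x * M^[n] (M k) x := by rw [Function.iterate_succ_apply]
        _ = ∑ x, π x * M^[n] h x * M k x := ih h (M k)
        _ = ∑ x, π x * M (M^[n] h) x * k x := adj _ k
        _ = ∑ x, π x * M^[n+1] h x * k x := by rw [Function.iterate_succ_apply']
  set g : Ω → ℝ := fun y => f y - 1 with hgdef
  set b : ℕ → ℝ := fun t => ∑ x, π x * g x * M^[t] g x with hbdef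
  have shift : ∀ s t : ℕ, ∑ x, π x * M^[s] g x * M^[t] g x = b (s + t) := by
    intro s t
    rw [← adjIter s g (M^[t] g)]
    show _ = ∑ x, π x * g x * M^[s+t] g x
    rw [Function.iterate_add_apply]
  -- nonnegativity
  have T0pos : ∀ h : Ω → ℝ, 0 ≤ ∑ x, π x * h x * h x := by
    intro h
    apply Finset.sum_nonneg
    intro x _
    have e : π x * h x * h x = π x * (h x)^2 := by ring
    rw [e]
    exact mul_nonneg (hπ0 x).le (sq_nonneg _)
  have bnn : ∀ n : ℕ, 0 ≤ b n := by
    intro n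
    rcases Nat.even_or_odd n with ⟨s, hs⟩ | ⟨s, hs⟩
    · subst hs
      rw [← shift s s]
      exact T0pos (M^[s] g)
    · subst hs
      have h1 : b (2*s+1) = ∑ x, π x * M^[s] g x * M (M^[s] g) x := by
        have e : 2*s+1 = s + (s+1) := by omega
        rw [e, ← shift s (s+1), Function.iterate_succ_apply']
      rw [h1]
      exact hpsd (M^[s] g)
  -- bilinear form hypotheses
  have T0lin : ∀ (c : ℝ) (h k l : Ω → ℝ),
      ∑ x, π x * (c * h x + k x) * l x
        = c * (∑ x, π x * h x * l x) + ∑ x, π x * k x * l x := by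
    intro c h k l
    rw [Finset.mul_sum, ← Finset.sum_add_distrib]
    exact Finset.sum_congr rfl fun x _ => by ring
  have T0symm : ∀ h k : Ω → ℝ, (∑ x, π x * h x * k x) = ∑ x, π x * k x * h x :=
    fun h k => Finset.sum_congr rfl fun x _ => by ring
  have T1lin : ∀ (c : ℝ) (h k l : Ω → ℝ),
      ∑ x, π x * (c * h x + k x) * M l x
        = c * (∑ x, π x * h x * M l x) + ∑ x, π x * k x * M l x := by
    intro c h k l
    rw [Finset.mul_sum, ← Finset.sum_add_distrib]
    exact Finset.sum_congr rfl fun x _ => by ring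
  have T1symm : ∀ h k : Ω → ℝ, (∑ x, π x * h x * M k x) = ∑ x, π x * k x * M h x := by
    intro h k
    rw [adj h k]
    exact Finset.sum_congr rfl fun x _ => by ring
  have cs0 : ∀ s t : ℕ, b (s+t)^2 ≤ b (s+s) * b (t+t) := by
    intro s t
    have h : (∑ x, π x * (M^[s] g) x * (M^[t] g) x)^2
        ≤ (∑ x, π x * (M^[s] g) x * (M^[s] g) x) * (∑ x, π x * (M^[t] g) x * (M^[t] g) x) :=
      cs_aux (fun u v => ∑ x, π x * u x * v x) T0lin T0symm T0pos (M^[s] g) (M^[t] g)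
    rw [shift s t, shift s s, shift t t] at h
    exact h
  have cs1 : ∀ s t : ℕ, b (s+t+1)^2 ≤ b (s+s+1) * b (t+t+1) := by
    intro s t
    have h : (∑ x, π x * (M^[s] g) x * M (M^[t] g) x)^2
        ≤ (∑ x, π x * (M^[s] g) x * M (M^[s] g) x)
            * (∑ x, π x * (M^[t] g) x * M (M^[t] g) x) :=
      cs_aux (fun u v => ∑ x, π x * u x * M v x) T1lin T1symm hpsd (M^[s] g) (M^[t] g)
    have e : ∀ u v : ℕ, (∑ x, π x * (M^[u] g) x * M (M^[v] g) x) = b (u + v + 1) := by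
      intro u v
      rw [← Function.iterate_succ_apply' M v g, shift u (v+1)]
      congr 1 <;> omega
    rw [e s t, e s s, e t t] at h
    exact h
  have logcvx : ∀ n : ℕ, b (n+1)^2 ≤ b n * b (n+2) := by
    intro n
    rcases Nat.even_or_odd n with ⟨s, hs⟩ | ⟨s, hs⟩
    · subst hs
      have h := cs0 s (s+1)
      have e1 : s + (s+1) = (s+s) + 1 := by omega
      have e2 : (s+1)+(s+1) = (s+s)+2 := by omega
      rw [e1, e2] at h
      exact h
    · subst hs
      have h := cs1 s (s+1)
      have e1 : s+(s+1)+1 = (2*s+1)+1 := by omega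
      have e2 : s+s+1 = 2*s+1 := by omega
      have e3 : (s+1)+(s+1)+1 = (2*s+1)+2 := by omega
      rw [e1, e2, e3] at h
      exact h
  have ratio : ∀ t : ℕ, b 1 * b t ≤ b 0 * b (t+1) := by
    intro t
    induction t with
    | zero => exact le_of_eq (mul_comm _ _)
    | succ n ih =>
      rcases (bnn (n+1)).eq_or_lt with h | h
      · rw [← h, mul_zero]
        exact mul_nonneg (bnn 0) (bnn (n+2))
      · have lc := logcvx n
        have h1 : b 1 * (b (n+1) * b (n+1)) ≤ b 1 * (b n * b (n+2)) :=
          mul_le_mul_of_nonneg_left (by nlinarith [lc]) (bnn 1)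
        have h2 : (b 1 * b n) * b (n+2) ≤ (b 0 * b (n+1)) * b (n+2) :=
          mul_le_mul_of_nonneg_right ih (bnn (n+2))
        have h3 : b 1 * b (n+1) * b (n+1) ≤ (b 0 * b (n+2)) * b (n+1) := by nlinarith [h1, h2]
        exact le_of_mul_le_mul_right h3 h
  have main : ∀ s : ℕ, b 1 ^ (s+1) ≤ b 0 ^ s * b (s+1) := by
    intro s
    induction s with
    | zero => simp
    | succ n ih =>
      have h2 : b 1 * b 1 ^ (n+1) ≤ b 1 * (b 0 ^ n * b (n+1)) :=
        mul_le_mul_of_nonneg_left ih (bnn 1)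
      have h4 : b 0 ^ n * (b 1 * b (n+1)) ≤ b 0 ^ n * (b 0 * b (n+2)) :=
        mul_le_mul_of_nonneg_left (ratio (n+1)) (pow_nonneg (bnn 0) n)
      calc b 1 ^ (n+1+1) = b 1 * b 1 ^ (n+1) := by ring
        _ ≤ b 1 * (b 0 ^ n * b (n+1)) := h2
        _ = b 0 ^ n * (b 1 * b (n+1)) := by ring
        _ ≤ b 0 ^ n * (b 0 * b (n+2)) := h4
        _ = b 0 ^ (n+1) * b (n+1+1) := by ring
  -- distribution evolution
  have dist : ∀ (t : ℕ) (x : Ω), (stepDist P)^[t] μ x = π x * M^[t] f x := by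
    intro t
    induction t with
    | zero => intro x; simp [hπf x]
    | succ n ih =>
      intro x
      rw [Function.iterate_succ_apply', Function.iterate_succ_apply']
      show ∑ y, (stepDist P)^[n] μ y * P y x = π x * M (M^[n] f) x
      simp only [hMdef, matMulVec, Finset.mul_sum]
      refine Finset.sum_congr rfl fun y _ => ?_
      rw [ih y]
      calc π y * M^[n] f y * P y x = (π y * P y x) * M^[n] f y := by ring
        _ = (π x * P x y) * M^[n] f y := by rw [hrev y x]
        _ = π x * (P x y * M^[n] f y) := by ring
  have hμsum : ∑ x, μ x = 1 := by
    simp only [hμdef]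
    rw [Finset.sum_ite_mem, Finset.univ_inter, ← Finset.sum_div, ← hπBdef, div_self hπBne]
  have hfsum : ∑ x, π x * f x = 1 := by
    simp_rw [hπf]
    exact hμsum
  have statIter : ∀ t : ℕ, ∑ x, π x * M^[t] f x = 1 := by
    intro t
    induction t with
    | zero => simpa using hfsum
    | succ n ih =>
      rw [Function.iterate_succ_apply', stat (M^[n] f)]
      exact ih
  have Msub : ∀ h : Ω → ℝ, M (fun y => h y - 1) = fun x => M h x - 1 := by
    intro h
    funext x
    simp only [hMdef, matMulVec, mul_sub, Finset.sum_sub_distrib, mul_one, hP1 x]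
  have Mg : ∀ t : ℕ, M^[t] g = fun x => M^[t] f x - 1 := by
    intro t
    induction t with
    | zero => funext x; simp [hgdef]
    | succ n ih =>
      rw [Function.iterate_succ_apply', Function.iterate_succ_apply', ih, Msub]
  have hbt : ∀ t : ℕ, b t = (∑ x, π x * f x * M^[t] f x) - 1 := by
    intro t
    have e : ∀ x, π x * g x * M^[t] g x
        = π x * f x * M^[t] f x - π x * f x - π x * M^[t] f x + π x := by
      intro x
      rw [Mg t]
      simp only [hgdef]
      ring
    calc b t = ∑ x, (π x * f x * M^[t] f x - π x * f x - π x * M^[t] f x + π x) :=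
          Finset.sum_congr rfl fun x _ => e x
      _ = (∑ x, π x * f x * M^[t] f x) - (∑ x, π x * f x) - (∑ x, π x * M^[t] f x)
            + ∑ x, π x := by
          rw [Finset.sum_add_distrib, Finset.sum_sub_distrib, Finset.sum_sub_distrib]
      _ = (∑ x, π x * f x * M^[t] f x) - 1 := by rw [hfsum, statIter t, hπ1]; ring
  have hA : ∀ t : ℕ, ∑ x, π x * f x * M^[t] f x
      = (∑ x ∈ B, (stepDist P)^[t] μ x) / πB := by
    intro t
    have e : ∀ x, π x * f x * M^[t] f x
        = if x ∈ B then (stepDist P)^[t] μ x / πB else 0 := by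
      intro x
      rw [hπf x, dist t x]
      simp only [hμdef]
      by_cases hx : x ∈ B
      · simp only [hx, if_true]
        ring
      · simp [hx]
    rw [Finset.sum_congr rfl fun x _ => e x, Finset.sum_ite_mem, Finset.univ_inter,
      ← Finset.sum_div]
  have hbform : ∀ t : ℕ, b t = (∑ x ∈ B, (stepDist P)^[t] μ x) / πB - 1 := by
    intro t
    rw [hbt t, hA t]
  have hpt : ∀ t : ℕ, ∑ x ∈ B, (stepDist P)^[t] μ x = πB * (1 + b t) := by
    intro t
    rw [hbform t]
    field_simp
    ring
  have hb0 : b 0 = (1 - πB) / πB := by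
    have hpB0 : ∑ x ∈ B, (stepDist P)^[0] μ x = 1 := by
      simp only [Function.iterate_zero, id_eq, hμdef]
      rw [Finset.sum_congr rfl fun x hx => if_pos hx, ← Finset.sum_div, ← hπBdef,
        div_self hπBne]
    rw [hbform 0, hpB0]
    field_simp
  constructor
  · intro t
    rw [hpt t]
    nlinarith [bnn t, hπB0]
  · intro t ht
    obtain ⟨s, rfl⟩ : ∃ s, t = s + 1 := ⟨t - 1, by omega⟩
    rw [hpt (s+1), hpt 1, show ((1:ℤ) - ((s+1 : ℕ) : ℤ)) = -(s:ℤ) by push_cast; ring,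
      zpow_neg, zpow_natCast]
    have e1 : πB * (1 + b 1) - πB = πB * b 1 := by ring
    rw [e1, mul_pow]
    have hm := main s
    rw [hb0] at hm
    have key : πB ^ (s+1) * b 1 ^ (s+1) ≤ πB ^ (s+1) * (((1 - πB)/πB) ^ s * b (s+1)) :=
      mul_le_mul_of_nonneg_left hm (pow_nonneg hπB0.le _)
    have eq2 : ((1 - πB) ^ s)⁻¹ * (πB ^ (s+1) * (((1 - πB)/πB) ^ s * b (s+1)))
        = πB * b (s+1) := by
      rw [div_pow]
      field_simp
      ring
    have h5 : ((1 - πB) ^ s)⁻¹ * (πB ^ (s+1) * b 1 ^ (s+1))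
        ≤ ((1 - πB) ^ s)⁻¹ * (πB ^ (s+1) * (((1 - πB)/πB) ^ s * b (s+1))) :=
      mul_le_mul_of_nonneg_left key (inv_nonneg.mpr (pow_nonneg hq0.le _))
    rw [eq2] at h5
    nlinarith [h5]
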